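/- Let 0<β<1, let f be integrable on (0,∞) and let g be measurable on (0,∞) with ∫₀^∞ |g(v)| K₀(βv) dv < ∞. Then for every y>0 the factorization equality holds: F_c(f⋆g)(y) = sin(y)·(F_s f)(y)·K[g](y). -/

import Mathlib

open MeasureTheory Real Set

/-- The kernel function φ(x,u,v). -/
noncomputable def phiKer (x u v : ℝ) : ℝ :=
  Real.exp (-v * Real.cosh (x + u - 1)) + Real.exp (-v * Real.cosh (x - u + 1))
    - Real.exp (-v * Real.cosh (x + u + 1)) - Real.exp (-v * Real.cosh (x - u - 1))

/-- The modified Bessel function of the second kind of order zero. -/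
noncomputable def K0 (v : ℝ) : ℝ := ∫ t in Set.Ioi (0 : ℝ), Real.exp (-v * Real.cosh t)

/-- The trigonometric-weighted generalized convolution (f ⋆ g). -/
noncomputable def gconv (f g : ℝ → ℝ) (x : ℝ) : ℝ :=
  (1 / 4) * ∫ v in Set.Ioi (0 : ℝ), ∫ u in Set.Ioi (0 : ℝ), phiKer x u v * f u * g v

/-- Fourier cosine transform. -/
noncomputable def Fc (f : ℝ → ℝ) (y : ℝ) : ℝ :=
  Real.sqrt (2 / Real.pi) * ∫ x in Set.Ioi (0 : ℝ), f x * Real.cos (x * y)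

/-- Fourier sine transform. -/
noncomputable def Fs (f : ℝ → ℝ) (y : ℝ) : ℝ :=
  Real.sqrt (2 / Real.pi) * ∫ x in Set.Ioi (0 : ℝ), f x * Real.sin (x * y)

/-- Modified Bessel function K_{iy}(x). -/
noncomputable def Kiy (y x : ℝ) : ℝ :=
  ∫ u in Set.Ioi (0 : ℝ), Real.exp (-x * Real.cosh u) * Real.cos (y * u)

/-- Kontorovich–Lebedev transform. -/
noncomputable def KL (g : ℝ → ℝ) (y : ℝ) : ℝ := ∫ x in Set.Ioi (0 : ℝ), Kiy y x * g x

/-- Fourier cosine convolution. -/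
noncomputable def fcConv (f g : ℝ → ℝ) (x : ℝ) : ℝ :=
  (1 / Real.sqrt (2 * Real.pi)) * ∫ u in Set.Ioi (0 : ℝ), f u * (g |x - u| + g (x + u))

/-- Fourier sine–cosine generalized convolution. -/
noncomputable def fscConv (f g : ℝ → ℝ) (x : ℝ) : ℝ :=
  (1 / Real.sqrt (2 * Real.pi)) * ∫ u in Set.Ioi (0 : ℝ), f u * (g |x - u| - g (x + u))


lemma abs_add_one_le_two_cosh (t : ℝ) : 1 + |t| ≤ 2 * Real.cosh t := by
  rw [Real.cosh_eq]
  rcases abs_cases t with ⟨h, _⟩ | ⟨h, _⟩ <;>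
    nlinarith [Real.add_one_le_exp t, Real.add_one_le_exp (-t), Real.exp_pos t,
      Real.exp_pos (-t)]

lemma exp_abs_int {c : ℝ} (hc : 0 < c) :
    Integrable (fun t : ℝ => Real.exp (-c * |t|)) := by
  have hIoi : IntegrableOn (fun t : ℝ => Real.exp (-c * |t|)) (Ioi 0) :=
    (exp_neg_integrableOn_Ioi 0 hc).congr_fun
      (fun t ht => by rw [abs_of_pos ht]) measurableSet_Ioi
  have hIci : IntegrableOn (fun t : ℝ => Real.exp (-c * |t|)) (Ici 0) := by
    rwa [integrableOn_Ici_iff_integrableOn_Ioi]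
  have hIic : IntegrableOn (fun t : ℝ => Real.exp (-c * |t|)) (Iic 0) := by
    have A : MeasurableEmbedding fun x : ℝ => -x :=
      (Homeomorph.neg ℝ).isClosedEmbedding.measurableEmbedding
    have h1 : Measure.map (fun x : ℝ => -x) (volume.restrict (Ici 0)) =
        volume.restrict (Iic 0) := by
      have h2 : Ici (0:ℝ) = (fun x : ℝ => -x) ⁻¹' (Iic 0) := by
        ext x; simp [neg_nonpos]
      rw [h2, ← A.restrict_map, Measure.map_neg_eq_self]
    rw [IntegrableOn, ← h1, A.integrable_map_iff]
    have : ((fun t : ℝ => Real.exp (-c * |t|)) ∘ fun x : ℝ => -x)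
        = fun t : ℝ => Real.exp (-c * |t|) := by
      ext t; simp
    rwa [this]
  have := hIic.union hIoi
  rwa [Iic_union_Ioi, integrableOn_univ] at this

lemma W_integrable {v : ℝ} (hv : 0 < v) :
    Integrable (fun t : ℝ => Real.exp (-v * Real.cosh t)) := by
  have h2 : Integrable (fun t : ℝ =>
      Real.exp (-(v/2)) * Real.exp (-(v/2) * |t|)) :=
    (exp_abs_int (by linarith)).const_mul _
  refine h2.mono' ?_ (ae_of_all _ fun t => ?_)
  · exact (Real.continuous_exp.comp (by continuity)).aestronglyMeasurable
  · rw [Real.norm_eq_abs, abs_of_nonneg (Real.exp_nonneg _), ← Real.exp_add]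
    apply Real.exp_le_exp.2
    have := abs_add_one_le_two_cosh t
    nlinarith


lemma setIntegral_shift (h : ℝ → ℝ) (a c : ℝ) :
    ∫ x in Ioi c, h (x + a) = ∫ t in Ioi (c + a), h t := by
  have A : MeasurableEmbedding fun x : ℝ => x + a :=
    (Homeomorph.addRight a).isClosedEmbedding.measurableEmbedding
  have := A.setIntegral_map (μ := volume) h (Ioi (c + a))
  rw [map_add_right_eq_self volume a] at this
  rw [this]
  congr 1
  ext x
  simp [mem_preimage, mem_Ioi]

lemma IntegrableOn_shift {h : ℝ → ℝ} (hh : Integrable h) (a c : ℝ) :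
    IntegrableOn (fun x => h (x + a)) (Ioi c) :=
  (hh.comp_add_right a).integrableOn

lemma int_mul_bounded {m : Measure ℝ} {h b : ℝ → ℝ} (hh : Integrable h m)
    (hb : Continuous b) (hb1 : ∀ x, |b x| ≤ 1) :
    Integrable (fun x => h x * b x) m := by
  refine hh.mono (hh.aestronglyMeasurable.mul hb.aestronglyMeasurable)
    (ae_of_all _ fun x => ?_)
  rw [Real.norm_eq_abs, Real.norm_eq_abs, abs_mul]
  exact mul_le_of_le_one_right (abs_nonneg _) (hb1 x)

lemma refl_even {h : ℝ → ℝ} (hh : Integrable h) (he : ∀ x, h (-x) = h x) (a : ℝ) :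
    (∫ t in Ioi a, h t) + ∫ t in Ioi (-a), h t = ∫ t, h t := by
  have h1 : ∫ t in Ioi (-a), h t = ∫ t in Iic a, h t := by
    rw [← integral_comp_neg_Iic]
    simp only [he]
  rw [h1, add_comm, intervalIntegral.integral_Iic_add_Ioi hh.integrableOn hh.integrableOn]

lemma total_odd {h : ℝ → ℝ} (hh : Integrable h) (ho : ∀ x, h (-x) = - h x) :
    ∫ t, h t = 0 := by
  have h1 : ∫ t, h (-t) = ∫ t, h t := integral_neg_eq_self h volume
  simp only [ho, integral_neg] at h1
  linarith

lemma refl_odd {h : ℝ → ℝ} (hh : Integrable h) (ho : ∀ x, h (-x) = - h x) (a : ℝ) :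
    ∫ t in Ioi (-a), h t = ∫ t in Ioi a, h t := by
  have h1 : ∫ t in Ioi (-a), h t = ∫ t in Iic a, h (-t) := by
    rw [integral_comp_neg_Iic]
  have h2 : ∫ t in Iic a, h (-t) = - ∫ t in Iic a, h t := by
    simp only [ho, integral_neg]
  have h3 : (∫ t in Iic a, h t) + ∫ t in Ioi a, h t = ∫ t, h t :=
    intervalIntegral.integral_Iic_add_Ioi hh.integrableOn hh.integrableOn
  rw [total_odd hh ho] at h3
  rw [h1, h2]
  linarith

section KeyIdentity
variable {v y : ℝ}

lemma Wcos_even (v y : ℝ) : ∀ x : ℝ,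
    Real.exp (-v * Real.cosh (-x)) * Real.cos (-x * y)
      = Real.exp (-v * Real.cosh x) * Real.cos (x * y) := by
  intro x
  rw [Real.cosh_neg, show -x * y = -(x * y) by ring, Real.cos_neg]

lemma Wsin_odd (v y : ℝ) : ∀ x : ℝ,
    Real.exp (-v * Real.cosh (-x)) * Real.sin (-x * y)
      = -(Real.exp (-v * Real.cosh x) * Real.sin (x * y)) := by
  intro x
  rw [Real.cosh_neg, show -x * y = -(x * y) by ring, Real.sin_neg]; ring

lemma Wcos_int (hv : 0 < v) (y : ℝ) :
    Integrable (fun t : ℝ => Real.exp (-v * Real.cosh t) * Real.cos (t * y)) :=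
  int_mul_bounded (W_integrable hv) (by continuity) (fun x => abs_cos_le_one _)

lemma Wsin_int (hv : 0 < v) (y : ℝ) :
    Integrable (fun t : ℝ => Real.exp (-v * Real.cosh t) * Real.sin (t * y)) :=
  int_mul_bounded (W_integrable hv) (by continuity) (fun x => abs_sin_le_one _)

lemma total_W (hv : 0 < v) :
    ∫ t : ℝ, Real.exp (-v * Real.cosh t) = 2 * K0 v := by
  have h := refl_even (W_integrable hv) (fun x => by rw [Real.cosh_neg]) 0
  rw [neg_zero] at h
  rw [← h, K0]; ring

lemma total_Wcos (hv : 0 < v) (y : ℝ) :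
    ∫ t : ℝ, Real.exp (-v * Real.cosh t) * Real.cos (t * y) = 2 * Kiy y v := by
  have h := refl_even (Wcos_int hv y) (Wcos_even v y) 0
  rw [neg_zero] at h
  rw [← h, Kiy]
  have h2 : ∀ u : ℝ, Real.exp (-v * Real.cosh u) * Real.cos (y * u)
      = Real.exp (-v * Real.cosh u) * Real.cos (u * y) := by
    intro u; rw [mul_comm y u]
  simp_rw [h2]; ring

/-- single shifted term -/
lemma termT (hv : 0 < v) (a y : ℝ) :
    ∫ x in Ioi (0:ℝ), Real.exp (-v * Real.cosh (x + a)) * Real.cos (x * y)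
      = Real.cos (a * y) * (∫ t in Ioi a, Real.exp (-v * Real.cosh t) * Real.cos (t * y))
        + Real.sin (a * y) * (∫ t in Ioi a, Real.exp (-v * Real.cosh t) * Real.sin (t * y)) := by
  have h0 : ∀ x : ℝ, Real.exp (-v * Real.cosh (x + a)) * Real.cos (x * y)
      = (fun t => Real.exp (-v * Real.cosh t) * Real.cos ((t - a) * y)) (x + a) := by
    intro x; simp [add_sub_cancel_right]
  simp_rw [h0]
  rw [setIntegral_shift (fun t => Real.exp (-v * Real.cosh t) * Real.cos ((t - a) * y)) a 0,
    zero_add]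
  have h1 : ∀ t : ℝ, Real.exp (-v * Real.cosh t) * Real.cos ((t - a) * y)
      = Real.cos (a * y) * (Real.exp (-v * Real.cosh t) * Real.cos (t * y))
        + Real.sin (a * y) * (Real.exp (-v * Real.cosh t) * Real.sin (t * y)) := by
    intro t
    rw [show (t - a) * y = t * y - a * y by ring, Real.cos_sub]; ring
  simp_rw [h1]
  have hA : IntegrableOn (fun t : ℝ =>
      Real.cos (a * y) * (Real.exp (-v * Real.cosh t) * Real.cos (t * y))) (Ioi a) :=
    ((Wcos_int hv y).integrableOn).const_mul _
  have hB : IntegrableOn (fun t : ℝ =>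
      Real.sin (a * y) * (Real.exp (-v * Real.cosh t) * Real.sin (t * y))) (Ioi a) :=
    ((Wsin_int hv y).integrableOn).const_mul _
  rw [integral_add hA hB, integral_const_mul, integral_const_mul]

/-- paired terms -/
lemma pairT (hv : 0 < v) (a y : ℝ) :
    (∫ x in Ioi (0:ℝ), Real.exp (-v * Real.cosh (x + a)) * Real.cos (x * y))
      + ∫ x in Ioi (0:ℝ), Real.exp (-v * Real.cosh (x + -a)) * Real.cos (x * y)
      = Real.cos (a * y) * (2 * Kiy y v) := by
  rw [termT hv a y, termT hv (-a) y]
  have hS : ∫ t in Ioi (-a), Real.exp (-v * Real.cosh t) * Real.sin (t * y)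
      = ∫ t in Ioi a, Real.exp (-v * Real.cosh t) * Real.sin (t * y) :=
    refl_odd (Wsin_int hv y) (Wsin_odd v y) a
  have hC : (∫ t in Ioi a, Real.exp (-v * Real.cosh t) * Real.cos (t * y))
      + ∫ t in Ioi (-a), Real.exp (-v * Real.cosh t) * Real.cos (t * y)
      = 2 * Kiy y v := by
    rw [refl_even (Wcos_int hv y) (Wcos_even v y) a]
    exact total_Wcos hv y
  have hcos : Real.cos (-a * y) = Real.cos (a * y) := by
    rw [show -a * y = -(a * y) by ring, Real.cos_neg]
  have hsin : Real.sin (-a * y) = -Real.sin (a * y) := by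
    rw [show -a * y = -(a * y) by ring, Real.sin_neg]
  rw [hS, hcos, hsin]
  linear_combination Real.cos (a * y) * hC

lemma exp_shift_cos_int (hv : 0 < v) (a y : ℝ) :
    IntegrableOn (fun x => Real.exp (-v * Real.cosh (x + a)) * Real.cos (x * y)) (Ioi 0) :=
  (int_mul_bounded ((W_integrable hv).comp_add_right a) (by continuity)
    (fun x => abs_cos_le_one _)).integrableOn

/-- The key inner integral identity -/
lemma intA (hv : 0 < v) (u y : ℝ) :
    ∫ x in Ioi (0:ℝ), phiKer x u v * Real.cos (x * y)
      = 4 * Real.sin y * Real.sin (u * y) * Kiy y v := by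
  have e1 : ∀ x : ℝ, phiKer x u v * Real.cos (x * y)
      = (Real.exp (-v * Real.cosh (x + (u - 1))) * Real.cos (x * y)
          + Real.exp (-v * Real.cosh (x + -(u - 1))) * Real.cos (x * y))
        - (Real.exp (-v * Real.cosh (x + (u + 1))) * Real.cos (x * y)
          + Real.exp (-v * Real.cosh (x + -(u + 1))) * Real.cos (x * y)) := by
    intro x
    rw [show x + (u - 1) = x + u - 1 by ring, show x + -(u - 1) = x - u + 1 by ring,
      show x + (u + 1) = x + u + 1 by ring, show x + -(u + 1) = x - u - 1 by ring, phiKer]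
    ring
  simp_rw [e1]
  have hAB : IntegrableOn (fun x : ℝ =>
      Real.exp (-v * Real.cosh (x + (u - 1))) * Real.cos (x * y)
        + Real.exp (-v * Real.cosh (x + -(u - 1))) * Real.cos (x * y)) (Ioi 0) :=
    (exp_shift_cos_int hv (u - 1) y).add (exp_shift_cos_int hv (-(u - 1)) y)
  have hCD : IntegrableOn (fun x : ℝ =>
      Real.exp (-v * Real.cosh (x + (u + 1))) * Real.cos (x * y)
        + Real.exp (-v * Real.cosh (x + -(u + 1))) * Real.cos (x * y)) (Ioi 0) :=
    (exp_shift_cos_int hv (u + 1) y).add (exp_shift_cos_int hv (-(u + 1)) y)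
  rw [integral_sub hAB hCD,
    integral_add (exp_shift_cos_int hv (u - 1) y) (exp_shift_cos_int hv (-(u - 1)) y),
    integral_add (exp_shift_cos_int hv (u + 1) y) (exp_shift_cos_int hv (-(u + 1)) y),
    pairT hv (u - 1) y, pairT hv (u + 1) y,
    show (u - 1) * y = u * y - y by ring, show (u + 1) * y = u * y + y by ring,
    Real.cos_sub, Real.cos_add]
  ring
end KeyIdentity

noncomputable abbrev μ₀ : Measure ℝ := volume.restrict (Set.Ioi 0)

lemma continuous_phi (v : ℝ) : Continuous fun p : ℝ × ℝ => phiKer p.2 p.1 v := by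
  unfold phiKer
  have h : ∀ u : ℝ → ℝ, Continuous u →
      Continuous fun p : ℝ × ℝ => Real.exp (-v * Real.cosh (p.2 + u p.1)) := fun u hu =>
    Real.continuous_exp.comp ((continuous_const.mul
      (Real.continuous_cosh.comp (continuous_snd.add (hu.comp continuous_fst)))))
  have h1 := h (fun t => t - 1) (by continuity)
  have h2 := h (fun t => -t + 1) (by continuity)
  have h3 := h (fun t => t + 1) (by continuity)
  have h4 := h (fun t => -t - 1) (by continuity)
  simp only [show ∀ p : ℝ × ℝ, p.2 + (p.1 - 1) = p.2 + p.1 - 1 from fun p => by ring] at h1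
  simp only [show ∀ p : ℝ × ℝ, p.2 + (-p.1 + 1) = p.2 - p.1 + 1 from fun p => by ring] at h2
  simp only [show ∀ p : ℝ × ℝ, p.2 + (p.1 + 1) = p.2 + p.1 + 1 from fun p => by ring] at h3
  simp only [show ∀ p : ℝ × ℝ, p.2 + (-p.1 - 1) = p.2 - p.1 - 1 from fun p => by ring] at h4
  exact ((h1.add h2).sub h3).sub h4

lemma phi_abs_le (hv : 0 ≤ v) (x u : ℝ) : |phiKer x u v| ≤
    Real.exp (-v * Real.cosh (x + u - 1)) + Real.exp (-v * Real.cosh (x - u + 1))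
      + Real.exp (-v * Real.cosh (x + u + 1)) + Real.exp (-v * Real.cosh (x - u - 1)) := by
  rw [phiKer, abs_le]
  constructor <;>
    nlinarith [Real.exp_nonneg (-v * Real.cosh (x + u - 1)),
      Real.exp_nonneg (-v * Real.cosh (x - u + 1)),
      Real.exp_nonneg (-v * Real.cosh (x + u + 1)),
      Real.exp_nonneg (-v * Real.cosh (x - u - 1))]

lemma phi_x_int {v : ℝ} (hv : 0 < v) (u : ℝ) :
    Integrable (fun x => phiKer x u v) μ₀ := by
  have h : ∀ a : ℝ, Integrable (fun x : ℝ => Real.exp (-v * Real.cosh (x + a))) μ₀ :=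
    fun a => ((W_integrable hv).comp_add_right a).integrableOn
  have e : (fun x => phiKer x u v) = fun x =>
      Real.exp (-v * Real.cosh (x + (u - 1))) + Real.exp (-v * Real.cosh (x + (-u + 1)))
        - Real.exp (-v * Real.cosh (x + (u + 1)))
        - Real.exp (-v * Real.cosh (x + (-u - 1))) := by
    funext x
    rw [phiKer, show x + (u - 1) = x + u - 1 by ring, show x + (-u + 1) = x - u + 1 by ring,
      show x + (u + 1) = x + u + 1 by ring, show x + (-u - 1) = x - u - 1 by ring]
  rw [e]
  exact (((h (u - 1)).add (h (-u + 1))).sub (h (u + 1))).sub (h (-u - 1))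

lemma shift_int_le {v : ℝ} (hv : 0 < v) (a : ℝ) :
    ∫ x in Ioi (0:ℝ), Real.exp (-v * Real.cosh (x + a)) ≤ 2 * K0 v := by
  rw [setIntegral_shift (fun t => Real.exp (-v * Real.cosh t)) a 0, zero_add, ← total_W hv]
  exact setIntegral_le_integral (W_integrable hv)
    (ae_of_all _ fun t => Real.exp_nonneg _)

lemma int_x_phi_abs_le {v : ℝ} (hv : 0 < v) (u : ℝ) :
    ∫ x, |phiKer x u v| ∂μ₀ ≤ 8 * K0 v := by
  have h : ∀ a : ℝ, Integrable (fun x : ℝ => Real.exp (-v * Real.cosh (x + a))) μ₀ :=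
    fun a => ((W_integrable hv).comp_add_right a).integrableOn
  have e : ∀ x : ℝ, Real.exp (-v * Real.cosh (x + u - 1)) + Real.exp (-v * Real.cosh (x - u + 1))
      + Real.exp (-v * Real.cosh (x + u + 1)) + Real.exp (-v * Real.cosh (x - u - 1))
      = Real.exp (-v * Real.cosh (x + (u - 1))) + Real.exp (-v * Real.cosh (x + (-u + 1)))
        + Real.exp (-v * Real.cosh (x + (u + 1))) + Real.exp (-v * Real.cosh (x + (-u - 1))) := by
    intro x
    rw [show x + (u - 1) = x + u - 1 by ring, show x + (-u + 1) = x - u + 1 by ring,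
      show x + (u + 1) = x + u + 1 by ring, show x + (-u - 1) = x - u - 1 by ring]
  calc ∫ x, |phiKer x u v| ∂μ₀
      ≤ ∫ x, (Real.exp (-v * Real.cosh (x + (u - 1))) + Real.exp (-v * Real.cosh (x + (-u + 1)))
          + Real.exp (-v * Real.cosh (x + (u + 1))) + Real.exp (-v * Real.cosh (x + (-u - 1)))) ∂μ₀ := by
        refine integral_mono (phi_x_int hv u).abs
          ((((h (u - 1)).add (h (-u + 1))).add (h (u + 1))).add (h (-u - 1))) fun x => ?_
        rw [← e x]
        exact phi_abs_le hv.le x u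
    _ = (∫ x, Real.exp (-v * Real.cosh (x + (u - 1))) ∂μ₀)
          + (∫ x, Real.exp (-v * Real.cosh (x + (-u + 1))) ∂μ₀)
          + (∫ x, Real.exp (-v * Real.cosh (x + (u + 1))) ∂μ₀)
          + (∫ x, Real.exp (-v * Real.cosh (x + (-u - 1))) ∂μ₀) := by
        have h12 : Integrable (fun x : ℝ => Real.exp (-v * Real.cosh (x + (u - 1)))
            + Real.exp (-v * Real.cosh (x + (-u + 1)))) μ₀ := (h _).add (h _)
        have h123 : Integrable (fun x : ℝ => Real.exp (-v * Real.cosh (x + (u - 1)))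
            + Real.exp (-v * Real.cosh (x + (-u + 1)))
            + Real.exp (-v * Real.cosh (x + (u + 1)))) μ₀ := h12.add (h _)
        rw [integral_add h123 (h _), integral_add h12 (h _), integral_add (h _) (h _)]
    _ ≤ 2 * K0 v + 2 * K0 v + 2 * K0 v + 2 * K0 v := by
        gcongr <;> exact shift_int_le hv _
    _ = 8 * K0 v := by ring

lemma K0_nonneg (v : ℝ) : 0 ≤ K0 v :=
  integral_nonneg fun t => Real.exp_nonneg _

lemma K0_antitone {a b : ℝ} (ha : 0 < a) (hab : a ≤ b) : K0 b ≤ K0 a := by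
  refine integral_mono (W_integrable (lt_of_lt_of_le ha hab)).integrableOn
    (W_integrable ha).integrableOn fun t => ?_
  apply Real.exp_le_exp.2
  nlinarith [Real.one_le_cosh t]

lemma norm_int_x_le {f : ℝ → ℝ} (hf : IntegrableOn f (Ioi 0)) {v : ℝ} (hv : 0 < v)
    {χ : ℝ → ℝ} (hχ : Continuous χ) (hχ1 : ∀ x, |χ x| ≤ 1) (u : ℝ) :
    ∫ x, ‖phiKer x u v * f u * χ x‖ ∂μ₀ ≤ |f u| * (8 * K0 v) := by
  have h1 : Integrable (fun x => phiKer x u v * χ x) μ₀ :=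
    int_mul_bounded (phi_x_int hv u) hχ hχ1
  have e : (fun x => phiKer x u v * f u * χ x)
      = fun x => f u * (phiKer x u v * χ x) := by funext x; ring
  calc ∫ x, ‖phiKer x u v * f u * χ x‖ ∂μ₀
      ≤ ∫ x, |phiKer x u v| * |f u| ∂μ₀ := by
        have hsec : Integrable (fun x => phiKer x u v * f u * χ x) μ₀ := by
          rw [e]; exact h1.const_mul _
        refine integral_mono hsec.norm ((phi_x_int hv u).abs.mul_const _) fun x => ?_
        rw [Real.norm_eq_abs, abs_mul, abs_mul]
        exact mul_le_of_le_one_right (mul_nonneg (abs_nonneg _) (abs_nonneg _)) (hχ1 x)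
    _ = (∫ x, |phiKer x u v| ∂μ₀) * |f u| := integral_mul_const _ _
    _ ≤ (8 * K0 v) * |f u| :=
        mul_le_mul_of_nonneg_right (int_x_phi_abs_le hv u) (abs_nonneg _)
    _ = |f u| * (8 * K0 v) := by ring

/-- Joint integrability of the basic double integrand, for fixed `v`. -/
lemma PhiProdInt {f : ℝ → ℝ} (hf : IntegrableOn f (Ioi 0)) {v : ℝ} (hv : 0 < v)
    {χ : ℝ → ℝ} (hχ : Continuous χ) (hχ1 : ∀ x, |χ x| ≤ 1) :
    Integrable (fun p : ℝ × ℝ => phiKer p.2 p.1 v * f p.1 * χ p.2) (μ₀.prod μ₀) := by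
  have hmeas : AEStronglyMeasurable
      (fun p : ℝ × ℝ => phiKer p.2 p.1 v * f p.1 * χ p.2) (μ₀.prod μ₀) :=
    (((continuous_phi v).aestronglyMeasurable).mul hf.aestronglyMeasurable.comp_fst).mul
      ((hχ.comp continuous_snd).aestronglyMeasurable)
  rw [integrable_prod_iff hmeas]
  constructor
  · refine ae_of_all _ fun u => ?_
    have h1 : Integrable (fun x => phiKer x u v * χ x) μ₀ :=
      int_mul_bounded (phi_x_int hv u) hχ hχ1
    have e : (fun x => phiKer x u v * f u * χ x)
        = fun x => f u * (phiKer x u v * χ x) := by funext x; ring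
    rw [e]
    exact h1.const_mul _
  · refine Integrable.mono' (g := fun u => |f u| * (8 * K0 v)) (hf.abs.mul_const _)
      hmeas.norm.integral_prod_right' (ae_of_all _ fun u => ?_)
    rw [Real.norm_eq_abs, abs_of_nonneg (integral_nonneg fun x => norm_nonneg _)]
    exact norm_int_x_le hf hv hχ hχ1 u

lemma continuous_phi_comp {α : Type*} [TopologicalSpace α] {X U V : α → ℝ}
    (hX : Continuous X) (hU : Continuous U) (hV : Continuous V) :
    Continuous fun a => phiKer (X a) (U a) (V a) := by
  unfold phiKer
  have h : ∀ s : α → ℝ, Continuous s →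
      Continuous fun a => Real.exp (-V a * Real.cosh (s a)) := fun s hs =>
    Real.continuous_exp.comp (hV.neg.mul (Real.continuous_cosh.comp hs))
  exact (((h _ ((hX.add hU).sub continuous_const)).add
    (h _ ((hX.sub hU).add continuous_const))).sub
    (h _ ((hX.add hU).add continuous_const))).sub
    (h _ ((hX.sub hU).sub continuous_const))

section Main
variable {f g : ℝ → ℝ} {y v β : ℝ}

/-- inner factorization for fixed v -/
lemma innerEq (hf : IntegrableOn f (Ioi 0)) (hv : 0 < v) (y : ℝ) :
    ∫ x, (∫ u, phiKer x u v * f u ∂μ₀) * Real.cos (x * y) ∂μ₀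
      = 4 * Real.sin y * Kiy y v * ∫ u, f u * Real.sin (u * y) ∂μ₀ := by
  have hcos : Continuous fun x : ℝ => Real.cos (x * y) := by continuity
  have P := PhiProdInt hf hv hcos (fun x => abs_cos_le_one _)
  have swap := integral_integral_swap
    (f := fun u x => phiKer x u v * f u * Real.cos (x * y)) P
  have e1 : ∀ x : ℝ, (∫ u, phiKer x u v * f u ∂μ₀) * Real.cos (x * y)
      = ∫ u, phiKer x u v * f u * Real.cos (x * y) ∂μ₀ := fun x =>
    (integral_mul_const _ _).symm
  calc ∫ x, (∫ u, phiKer x u v * f u ∂μ₀) * Real.cos (x * y) ∂μ₀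
      = ∫ x, (∫ u, phiKer x u v * f u * Real.cos (x * y) ∂μ₀) ∂μ₀ :=
        integral_congr_ae (ae_of_all _ e1)
    _ = ∫ u, (∫ x, phiKer x u v * f u * Real.cos (x * y) ∂μ₀) ∂μ₀ := swap.symm
    _ = ∫ u, (4 * Real.sin y * Kiy y v) * (f u * Real.sin (u * y)) ∂μ₀ := by
        refine integral_congr_ae (ae_of_all _ fun u => ?_)
        show (∫ x, phiKer x u v * f u * Real.cos (x * y) ∂μ₀)
            = 4 * Real.sin y * Kiy y v * (f u * Real.sin (u * y))
        have e2 : ∀ x : ℝ, phiKer x u v * f u * Real.cos (x * y)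
            = f u * (phiKer x u v * Real.cos (x * y)) := fun x => by ring
        rw [integral_congr_ae (ae_of_all _ e2), integral_const_mul, intA hv u y]
        ring
    _ = (4 * Real.sin y * Kiy y v) * ∫ u, f u * Real.sin (u * y) ∂μ₀ :=
        integral_const_mul _ _
    _ = 4 * Real.sin y * Kiy y v * ∫ u, f u * Real.sin (u * y) ∂μ₀ := by ring

lemma sectionInt (hf : IntegrableOn f (Ioi 0)) (hv : 0 < v) (y : ℝ) (c : ℝ) :
    Integrable (fun x => (∫ u, phiKer x u v * f u * c ∂μ₀) * Real.cos (x * y)) μ₀ := by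
  have hone : Continuous fun _ : ℝ => (1:ℝ) := continuous_const
  have P1 := (PhiProdInt hf hv hone (fun x => by norm_num)).integral_prod_right
  have e : (fun x => ∫ u, phiKer x u v * f u * (1:ℝ) ∂μ₀)
      = fun x => ∫ u, phiKer x u v * f u ∂μ₀ := by
    funext x; simp
  rw [e] at P1
  have hcos : Continuous fun x : ℝ => Real.cos (x * y) := by continuity
  have base := (int_mul_bounded P1 hcos fun x => abs_cos_le_one _).mul_const c
  have e2 : (fun x => (∫ u, phiKer x u v * f u * c ∂μ₀) * Real.cos (x * y))
      = fun x => ((∫ u, phiKer x u v * f u ∂μ₀) * Real.cos (x * y)) * c := by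
    funext x
    rw [integral_mul_const]
    ring
  rw [e2]
  exact base

/-- Integrability of the outer double integrand. -/
lemma OuterInt (hf : IntegrableOn f (Ioi 0)) (hg : Measurable g)
    (hgK : IntegrableOn (fun v => |g v| * K0 (β * v)) (Ioi 0))
    (hβ : β ∈ Set.Ioo (0:ℝ) 1) (y : ℝ) :
    Integrable (fun p : ℝ × ℝ =>
      (∫ u, phiKer p.1 u p.2 * f u * g p.2 ∂μ₀) * Real.cos (p.1 * y)) (μ₀.prod μ₀) := by
  have hΘ : AEStronglyMeasurable
      (fun q : (ℝ × ℝ) × ℝ => phiKer q.1.1 q.2 q.1.2 * f q.2 * g q.1.2)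
      ((μ₀.prod μ₀).prod μ₀) := by
    refine (((continuous_phi_comp (continuous_fst.comp continuous_fst) continuous_snd
      (continuous_snd.comp continuous_fst)).aestronglyMeasurable).mul
      hf.aestronglyMeasurable.comp_snd).mul ?_
    exact (hg.comp (measurable_snd.comp measurable_fst)).aestronglyMeasurable
  have hcos : Continuous fun x : ℝ => Real.cos (x * y) := by continuity
  have hmeasF : AEStronglyMeasurable
      (fun p : ℝ × ℝ => (∫ u, phiKer p.1 u p.2 * f u * g p.2 ∂μ₀) * Real.cos (p.1 * y))
      (μ₀.prod μ₀) :=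
    hΘ.integral_prod_right'.mul ((hcos.comp continuous_fst).aestronglyMeasurable)
  rw [integrable_prod_iff' hmeasF]
  constructor
  · filter_upwards [ae_restrict_mem measurableSet_Ioi] with v hv
    exact sectionInt hf hv y (g v)
  · have Cf_def : (0:ℝ) ≤ ∫ u, |f u| ∂μ₀ := integral_nonneg fun u => abs_nonneg _
    set Cf : ℝ := ∫ u, |f u| ∂μ₀ with hCf
    refine Integrable.mono' (g := fun v => (8 * Cf) * (|g v| * K0 (β * v)))
      (hgK.const_mul _) hmeasF.norm.prod_swap.integral_prod_right'
      ?_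
    filter_upwards [ae_restrict_mem measurableSet_Ioi] with v hv
    have hone : Continuous fun _ : ℝ => (1:ℝ) := continuous_const
    have P := PhiProdInt hf hv hone (fun x => by norm_num)
    -- norm of section integrable
    have hsec := (sectionInt hf hv y (g v)).norm
    -- N1 integrable in x
    have hN1 : Integrable (fun x => ∫ u, ‖phiKer x u v * f u * (1:ℝ)‖ ∂μ₀) μ₀ :=
      P.integral_norm_prod_right
    -- pointwise bound (i)
    have hpt : ∀ x : ℝ, ‖(∫ u, phiKer x u v * f u * g v ∂μ₀) * Real.cos (x * y)‖
        ≤ |g v| * ∫ u, ‖phiKer x u v * f u * (1:ℝ)‖ ∂μ₀ := by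
      intro x
      have h1 : ‖(∫ u, phiKer x u v * f u * g v ∂μ₀) * Real.cos (x * y)‖
          ≤ ‖∫ u, phiKer x u v * f u * g v ∂μ₀‖ := by
        rw [norm_mul]
        exact mul_le_of_le_one_right (norm_nonneg _)
          (by rw [Real.norm_eq_abs]; exact abs_cos_le_one _)
      refine h1.trans ((norm_integral_le_integral_norm _).trans ?_)
      have e : ∀ u : ℝ, ‖phiKer x u v * f u * g v‖
          = |g v| * ‖phiKer x u v * f u * (1:ℝ)‖ := by
        intro u
        rw [Real.norm_eq_abs, Real.norm_eq_abs, mul_one, abs_mul]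
        ring
      rw [integral_congr_ae (ae_of_all _ e), integral_const_mul]
    -- swap for the norms
    have hswap := integral_integral_swap
      (f := fun u x => ‖phiKer x u v * f u * (1:ℝ)‖) P.norm
    have hNbound : ∫ x, (∫ u, ‖phiKer x u v * f u * (1:ℝ)‖ ∂μ₀) ∂μ₀ ≤ Cf * (8 * K0 v) := by
      rw [← hswap]
      calc ∫ u, (∫ x, ‖phiKer x u v * f u * (1:ℝ)‖ ∂μ₀) ∂μ₀
          ≤ ∫ u, |f u| * (8 * K0 v) ∂μ₀ := by
            refine integral_mono P.integral_norm_prod_left (hf.abs.mul_const _) fun u => ?_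
            exact norm_int_x_le hf hv hone (fun x => by norm_num) u
        _ = Cf * (8 * K0 v) := by rw [integral_mul_const]
    have key : ∫ x, ‖(∫ u, phiKer x u v * f u * g v ∂μ₀) * Real.cos (x * y)‖ ∂μ₀
        ≤ |g v| * (Cf * (8 * K0 v)) := by
      calc ∫ x, ‖(∫ u, phiKer x u v * f u * g v ∂μ₀) * Real.cos (x * y)‖ ∂μ₀
          ≤ ∫ x, |g v| * (∫ u, ‖phiKer x u v * f u * (1:ℝ)‖ ∂μ₀) ∂μ₀ :=
            integral_mono hsec (hN1.const_mul _) hpt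
        _ = |g v| * ∫ x, (∫ u, ‖phiKer x u v * f u * (1:ℝ)‖ ∂μ₀) ∂μ₀ :=
            integral_const_mul _ _
        _ ≤ |g v| * (Cf * (8 * K0 v)) := by
            exact mul_le_mul_of_nonneg_left hNbound (abs_nonneg _)
    rw [Real.norm_eq_abs, abs_of_nonneg (integral_nonneg fun x => norm_nonneg _)]
    refine key.trans ?_
    have hK : K0 v ≤ K0 (β * v) := by
      refine K0_antitone (by nlinarith [hβ.1, mem_Ioi.1 hv]) ?_
      nlinarith [hβ.2, mem_Ioi.1 hv, hβ.1]
    nlinarith [abs_nonneg (g v), K0_nonneg v, K0_nonneg (β * v), mem_Ioi.1 hv,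
      mul_le_mul_of_nonneg_left hK (abs_nonneg (g v))]

theorem gconv_factorization' (hβ : β ∈ Set.Ioo (0 : ℝ) 1)
    (hf : MeasureTheory.IntegrableOn f (Set.Ioi 0))
    (hg : Measurable g)
    (hgK : MeasureTheory.IntegrableOn (fun v => |g v| * K0 (β * v)) (Set.Ioi 0))
    (hy : 0 < y) :
    Fc (gconv f g) y = Real.sin y * Fs f y * KL g y := by
  have houter := OuterInt hf hg hgK hβ y
  have hswap := integral_integral_swap
    (f := fun x v => (∫ u, phiKer x u v * f u * g v ∂μ₀) * Real.cos (x * y)) houter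
  beta_reduce at hswap
  have step1 : Fc (gconv f g) y = Real.sqrt (2 / Real.pi) * ((1/4) *
      ∫ x, (∫ v, (∫ u, phiKer x u v * f u * g v ∂μ₀) * Real.cos (x * y) ∂μ₀) ∂μ₀) := by
    rw [Fc]
    congr 1
    have e : ∀ x : ℝ, gconv f g x * Real.cos (x * y)
        = (1/4) * ∫ v, (∫ u, phiKer x u v * f u * g v ∂μ₀) * Real.cos (x * y) ∂μ₀ := by
      intro x
      rw [gconv, integral_mul_const]
      ring
    rw [integral_congr_ae (ae_of_all _ e), integral_const_mul]
  have If_def : Fs f y = Real.sqrt (2 / Real.pi) * ∫ u, f u * Real.sin (u * y) ∂μ₀ := rfl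
  have step2 : ∫ v, (∫ x, (∫ u, phiKer x u v * f u * g v ∂μ₀) * Real.cos (x * y) ∂μ₀) ∂μ₀
      = (4 * Real.sin y * ∫ u, f u * Real.sin (u * y) ∂μ₀) * KL g y := by
    have e : ∀ᵐ v ∂μ₀, (∫ x, (∫ u, phiKer x u v * f u * g v ∂μ₀) * Real.cos (x * y) ∂μ₀)
        = (4 * Real.sin y * ∫ u, f u * Real.sin (u * y) ∂μ₀) * (Kiy y v * g v) := by
      filter_upwards [ae_restrict_mem measurableSet_Ioi] with v hv
      have e2 : ∀ x : ℝ, (∫ u, phiKer x u v * f u * g v ∂μ₀) * Real.cos (x * y)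
          = ((∫ u, phiKer x u v * f u ∂μ₀) * Real.cos (x * y)) * g v := by
        intro x
        rw [integral_mul_const]
        ring
      rw [integral_congr_ae (ae_of_all _ e2), integral_mul_const, innerEq hf hv y]
      ring
    rw [integral_congr_ae e, integral_const_mul, KL]
  rw [step1, hswap, step2, If_def]
  ring
end Main

theorem gconv_factorization (β : ℝ) (hβ : β ∈ Set.Ioo (0 : ℝ) 1) (f g : ℝ → ℝ)
    (hf : MeasureTheory.IntegrableOn f (Set.Ioi 0))
    (hg : Measurable g)
    (hgK : MeasureTheory.IntegrableOn (fun v => |g v| * K0 (β * v)) (Set.Ioi 0))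
    (y : ℝ) (hy : 0 < y) :
    Fc (gconv f g) y = Real.sin y * Fs f y * KL g y :=
  gconv_factorization' hβ hf hg hgK hy
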